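/- Let C be a model category, let f : A ⟶ B be a weak equivalence between fibrant objects, and let p : X ⟶ B be a fibration. Then, assuming the pullback A ×_B X exists, the base-change morphism (second projection) A ×_B X ⟶ X is a weak equivalence. -/

import Mathlib

open CategoryTheory CategoryTheory.Limits

universe u v

/-- `g` is a retract of `f` in the arrow category. -/
def IsArrowRetract {C : Type u} [Category.{v} C] {X Y A B : C}
    (g : X ⟶ Y) (f : A ⟶ B) : Prop :=
  ∃ (i : X ⟶ A) (r : A ⟶ X) (i' : Y ⟶ B) (r' : B ⟶ Y),
    i ≫ r = 𝟙 X ∧ i' ≫ r' = 𝟙 Y ∧ i ≫ f = g ≫ i' ∧ f ≫ r' = r ≫ g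

/-- A model structure (in Quillen's sense) on a category with finite limits and
colimits: three classes of morphisms satisfying two-out-of-three, stability
under retracts, the lifting axioms, and the factorization axioms. -/
structure ModelStructure (C : Type u) [Category.{v} C]
    [HasFiniteLimits C] [HasFiniteColimits C] where
  weq : MorphismProperty C
  fib : MorphismProperty C
  cof : MorphismProperty C
  weq_comp : ∀ {X Y Z : C} (f : X ⟶ Y) (g : Y ⟶ Z), weq f → weq g → weq (f ≫ g)
  weq_of_comp_left : ∀ {X Y Z : C} (f : X ⟶ Y) (g : Y ⟶ Z),
    weq f → weq (f ≫ g) → weq g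
  weq_of_comp_right : ∀ {X Y Z : C} (f : X ⟶ Y) (g : Y ⟶ Z),
    weq g → weq (f ≫ g) → weq f
  weq_retract : ∀ {X Y A B : C} (g : X ⟶ Y) (f : A ⟶ B),
    IsArrowRetract g f → weq f → weq g
  fib_retract : ∀ {X Y A B : C} (g : X ⟶ Y) (f : A ⟶ B),
    IsArrowRetract g f → fib f → fib g
  cof_retract : ∀ {X Y A B : C} (g : X ⟶ Y) (f : A ⟶ B),
    IsArrowRetract g f → cof f → cof g
  lift_triv_cof_fib : ∀ {A B X Y : C} (i : A ⟶ B) (p : X ⟶ Y),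
    cof i → weq i → fib p → HasLiftingProperty i p
  lift_cof_triv_fib : ∀ {A B X Y : C} (i : A ⟶ B) (p : X ⟶ Y),
    cof i → fib p → weq p → HasLiftingProperty i p
  factor_triv_cof_fib : ∀ {X Y : C} (f : X ⟶ Y),
    ∃ (Z : C) (i : X ⟶ Z) (p : Z ⟶ Y), cof i ∧ weq i ∧ fib p ∧ i ≫ p = f
  factor_cof_triv_fib : ∀ {X Y : C} (f : X ⟶ Y),
    ∃ (Z : C) (i : X ⟶ Z) (p : Z ⟶ Y), cof i ∧ fib p ∧ weq p ∧ i ≫ p = f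

section Aux

variable {C : Type u} [Category.{v} C] [HasFiniteLimits C] [HasFiniteColimits C]

/-- Identities are weak equivalences. -/
lemma ModelStructure.weq_id (M : ModelStructure C) (Z : C) : M.weq (𝟙 Z) := by
  obtain ⟨W, i, p, _hc, hw, _hf, hip⟩ := M.factor_triv_cof_fib (𝟙 Z)
  exact M.weq_retract (𝟙 Z) i ⟨𝟙 Z, 𝟙 Z, i, p, by simp, hip, by simp, by simp [hip]⟩ hw

/-- Isomorphisms are weak equivalences. -/
lemma ModelStructure.weq_iso_hom (M : ModelStructure C) {Y Z : C} (e : Y ≅ Z) :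
    M.weq e.hom :=
  M.weq_retract e.hom (𝟙 Y) ⟨𝟙 Y, 𝟙 Y, e.inv, e.hom, by simp, by simp, by simp, by simp⟩
    (M.weq_id Y)

/-- Extract a lift from a lifting property. -/
lemma existsLift {A B X Y : C} {i : A ⟶ B} {p : X ⟶ Y}
    (h : HasLiftingProperty i p) {t : A ⟶ X} {b : B ⟶ Y} (w : t ≫ p = i ≫ b) :
    ∃ l : B ⟶ X, i ≫ l = t ∧ l ≫ p = b := by
  have sq : CommSq t i p b := ⟨w⟩
  obtain ⟨l⟩ := (h.sq_hasLift sq).exists_lift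
  exact ⟨l.l, l.fac_left, l.fac_right⟩

/-- Any map with the right lifting property against all trivial cofibrations
is a fibration (retract argument). -/
lemma ModelStructure.fib_of_rlp (M : ModelStructure C) {X Y : C} (g : X ⟶ Y)
    (h : ∀ {V W : C} (i : V ⟶ W), M.cof i → M.weq i → HasLiftingProperty i g) :
    M.fib g := by
  obtain ⟨Z, i, q, hci, hwi, hfq, hiq⟩ := M.factor_triv_cof_fib g
  obtain ⟨l, hl1, hl2⟩ := existsLift (h i hci hwi)
    (t := 𝟙 X) (b := q) (by simp [hiq])
  exact M.fib_retract g q ⟨i, l, 𝟙 Y, 𝟙 Y, hl1, by simp, by simp [hiq], by simp [hl2]⟩ hfq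

/-- Any map with the right lifting property against all cofibrations is a
trivial fibration (retract argument). -/
lemma ModelStructure.trivfib_of_rlp (M : ModelStructure C) {X Y : C} (g : X ⟶ Y)
    (h : ∀ {V W : C} (i : V ⟶ W), M.cof i → HasLiftingProperty i g) :
    M.fib g ∧ M.weq g := by
  obtain ⟨Z, i, q, hci, hfq, hwq, hiq⟩ := M.factor_cof_triv_fib g
  obtain ⟨l, hl1, hl2⟩ := existsLift (h i hci)
    (t := 𝟙 X) (b := q) (by simp [hiq])
  have hret : IsArrowRetract g q :=
    ⟨i, l, 𝟙 Y, 𝟙 Y, hl1, by simp, by simp [hiq], by simp [hl2]⟩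
  exact ⟨M.fib_retract g q hret hfq, M.weq_retract g q hret hwq⟩

/-- `pullback.fst f g` has the right lifting property against `i` whenever
`g` does. -/
lemma hasLiftingProperty_pullback_fst {V W X Y Z : C} (i : V ⟶ W)
    (f : X ⟶ Z) (g : Y ⟶ Z) (h : HasLiftingProperty i g) :
    HasLiftingProperty i (pullback.fst f g) := by
  constructor
  intro t b sq
  have w : (t ≫ pullback.snd f g) ≫ g = i ≫ (b ≫ f) := by
    rw [Category.assoc, ← pullback.condition, ← Category.assoc, sq.w, Category.assoc]
  obtain ⟨L, hL1, hL2⟩ := existsLift h w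
  refine CommSq.HasLift.mk' ⟨pullback.lift b L (by rw [hL2]), ?_, by simp [pullback.lift_fst, pullback.lift_snd, pullback.lift_fst_assoc, pullback.lift_snd_assoc]⟩
  apply pullback.hom_ext
  · simpa [pullback.lift_fst, pullback.lift_snd, pullback.lift_fst_assoc, pullback.lift_snd_assoc] using sq.w.symm
  · simpa [pullback.lift_fst, pullback.lift_snd, pullback.lift_fst_assoc, pullback.lift_snd_assoc] using hL1

/-- `pullback.snd f g` has the right lifting property against `i` whenever
`f` does. -/
lemma hasLiftingProperty_pullback_snd {V W X Y Z : C} (i : V ⟶ W)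
    (f : X ⟶ Z) (g : Y ⟶ Z) (h : HasLiftingProperty i f) :
    HasLiftingProperty i (pullback.snd f g) := by
  constructor
  intro t b sq
  have w : (t ≫ pullback.fst f g) ≫ f = i ≫ (b ≫ g) := by
    rw [Category.assoc, pullback.condition, ← Category.assoc, sq.w, Category.assoc]
  obtain ⟨L, hL1, hL2⟩ := existsLift h w
  refine CommSq.HasLift.mk' ⟨pullback.lift L b (by rw [hL2]), ?_, by simp [pullback.lift_fst, pullback.lift_snd, pullback.lift_fst_assoc, pullback.lift_snd_assoc]⟩
  apply pullback.hom_ext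
  · simpa [pullback.lift_fst, pullback.lift_snd, pullback.lift_fst_assoc, pullback.lift_snd_assoc] using hL1
  · simpa [pullback.lift_fst, pullback.lift_snd, pullback.lift_fst_assoc, pullback.lift_snd_assoc] using sq.w.symm

lemma ModelStructure.fib_comp (M : ModelStructure C) {X Y Z : C}
    {p : X ⟶ Y} {q : Y ⟶ Z} (hp : M.fib p) (hq : M.fib q) : M.fib (p ≫ q) := by
  apply M.fib_of_rlp
  intro V W i hci hwi
  have h1 := M.lift_triv_cof_fib i p hci hwi hp
  have h2 := M.lift_triv_cof_fib i q hci hwi hq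
  exact inferInstance

lemma ModelStructure.fib_pullback_fst (M : ModelStructure C) {X Y Z : C}
    (f : X ⟶ Z) {g : Y ⟶ Z} (hg : M.fib g) : M.fib (pullback.fst f g) := by
  apply M.fib_of_rlp
  intro V W i hci hwi
  exact hasLiftingProperty_pullback_fst i f g (M.lift_triv_cof_fib i g hci hwi hg)

lemma ModelStructure.fib_pullback_snd (M : ModelStructure C) {X Y Z : C}
    {f : X ⟶ Z} (g : Y ⟶ Z) (hf : M.fib f) : M.fib (pullback.snd f g) := by
  apply M.fib_of_rlp
  intro V W i hci hwi
  exact hasLiftingProperty_pullback_snd i f g (M.lift_triv_cof_fib i f hci hwi hf)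

lemma ModelStructure.trivfib_pullback_fst (M : ModelStructure C) {X Y Z : C}
    (f : X ⟶ Z) {g : Y ⟶ Z} (hg : M.fib g) (hwg : M.weq g) :
    M.fib (pullback.fst f g) ∧ M.weq (pullback.fst f g) := by
  apply M.trivfib_of_rlp
  intro V W i hci
  exact hasLiftingProperty_pullback_fst i f g (M.lift_cof_triv_fib i g hci hg hwg)

lemma ModelStructure.trivfib_pullback_snd (M : ModelStructure C) {X Y Z : C}
    {f : X ⟶ Z} (g : Y ⟶ Z) (hf : M.fib f) (hwf : M.weq f) :
    M.fib (pullback.snd f g) ∧ M.weq (pullback.snd f g) := by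
  apply M.trivfib_of_rlp
  intro V W i hci
  exact hasLiftingProperty_pullback_snd i f g (M.lift_cof_triv_fib i f hci hf hwf)

set_option maxHeartbeats 1000000 in
/-- Key lemma: the base change of a trivial cofibration `j : A ⟶ E` between
fibrant objects along a fibration `q : W ⟶ E` is a weak equivalence. -/
lemma ModelStructure.weq_pullback_snd_of_triv_cof (M : ModelStructure C)
    {A E W : C} (j : A ⟶ E) (q : W ⟶ E)
    (hcj : M.cof j) (hwj : M.weq j) (hq : M.fib q)
    (hA : M.fib (terminal.from A)) (hE : M.fib (terminal.from E)) :
    M.weq (pullback.snd j q) := by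
  -- a retraction `r` of `j`, using fibrancy of `A`
  obtain ⟨r, hr, -⟩ := existsLift (M.lift_triv_cof_fib j (terminal.from A) hcj hwj hA)
    (t := 𝟙 A) (b := terminal.from E) (by simp [terminal.comp_from])
  -- a path object for `E`
  obtain ⟨PE, σE, ρE, hcσE, hwσE, hfρE, hfacE⟩ :=
    M.factor_triv_cof_fib
      (pullback.lift (𝟙 E) (𝟙 E) rfl : E ⟶ pullback (terminal.from E) (terminal.from E))
  set π₀ : PE ⟶ E := ρE ≫ pullback.fst (terminal.from E) (terminal.from E) with hπ₀def
  set π₁ : PE ⟶ E := ρE ≫ pullback.snd (terminal.from E) (terminal.from E) with hπ₁def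
  have hσπ₀ : σE ≫ π₀ = 𝟙 E := by
    rw [hπ₀def, ← Category.assoc, hfacE]; simp [pullback.lift_fst, pullback.lift_snd, pullback.lift_fst_assoc, pullback.lift_snd_assoc]
  have hσπ₁ : σE ≫ π₁ = 𝟙 E := by
    rw [hπ₁def, ← Category.assoc, hfacE]; simp [pullback.lift_fst, pullback.lift_snd, pullback.lift_fst_assoc, pullback.lift_snd_assoc]
  have hπ₀fib : M.fib π₀ := M.fib_comp hfρE (M.fib_pullback_fst _ hE)
  have hπ₀weq : M.weq π₀ :=
    M.weq_of_comp_left σE π₀ hwσE (by rw [hσπ₀]; exact M.weq_id E)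
  -- the homotopy `K` between `𝟙 E` and `r ≫ j`, constant along `j`
  have hcommK : (j ≫ σE) ≫ ρE =
      j ≫ pullback.lift (𝟙 E) (r ≫ j) (by simp [terminal.comp_from]) := by
    rw [Category.assoc, hfacE]
    apply pullback.hom_ext
    · simp [pullback.lift_fst, pullback.lift_snd, pullback.lift_fst_assoc, pullback.lift_snd_assoc]
    · simp [pullback.lift_fst, pullback.lift_snd, pullback.lift_fst_assoc, pullback.lift_snd_assoc, reassoc_of% hr]
  obtain ⟨K, hK1, hK2⟩ :=
    existsLift (M.lift_triv_cof_fib j ρE hcj hwj hfρE) hcommK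
  have hKπ₀ : K ≫ π₀ = 𝟙 E := by
    rw [hπ₀def, ← Category.assoc, hK2]; simp [pullback.lift_fst, pullback.lift_snd, pullback.lift_fst_assoc, pullback.lift_snd_assoc]
  have hKπ₁ : K ≫ π₁ = r ≫ j := by
    rw [hπ₁def, ← Category.assoc, hK2]; simp [pullback.lift_fst, pullback.lift_snd, pullback.lift_fst_assoc, pullback.lift_snd_assoc]
  -- M₀ = W ×_E PE  (paths starting in the image of `q`)
  set fstM : pullback q π₀ ⟶ W := pullback.fst q π₀ with hfstMdef
  set sndM : pullback q π₀ ⟶ PE := pullback.snd q π₀ with hsndMdef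
  obtain ⟨hfstMfib, hfstMweq⟩ := M.trivfib_pullback_fst q hπ₀fib hπ₀weq
  rw [← hfstMdef] at hfstMfib hfstMweq
  -- N = M₀ ×_E W  (such paths equipped with a lift of the end point)
  set m₁ : pullback q π₀ ⟶ E := sndM ≫ π₁ with hm₁def
  set Φ : pullback m₁ q ⟶ pullback q π₀ := pullback.fst m₁ q with hΦdef
  set sndN : pullback m₁ q ⟶ W := pullback.snd m₁ q with hsndNdef
  have hΦfib : M.fib Φ := M.fib_pullback_fst m₁ hq
  -- the "constant path" map `W ⟶ N` and a relative path object `PqW`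
  have hcM : 𝟙 W ≫ q = (q ≫ σE) ≫ π₀ := by
    rw [Category.assoc, hσπ₀]; simp
  set cM : W ⟶ pullback q π₀ := pullback.lift (𝟙 W) (q ≫ σE) hcM with hcMdef
  have hcMfst : cM ≫ fstM = 𝟙 W := by rw [hcMdef, hfstMdef]; simp [pullback.lift_fst, pullback.lift_snd, pullback.lift_fst_assoc, pullback.lift_snd_assoc]
  have hcMsnd : cM ≫ sndM = q ≫ σE := by rw [hcMdef, hsndMdef]; simp [pullback.lift_fst, pullback.lift_snd, pullback.lift_fst_assoc, pullback.lift_snd_assoc]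
  have hcN : cM ≫ m₁ = 𝟙 W ≫ q := by
    rw [hm₁def, ← Category.assoc, hcMsnd, Category.assoc, hσπ₁]; simp
  set cN : W ⟶ pullback m₁ q := pullback.lift cM (𝟙 W) hcN with hcNdef
  obtain ⟨PqW, σq, ρq, hcσq, hwσq, hfρq, hfacq⟩ := M.factor_triv_cof_fib cN
  set Ψ : PqW ⟶ pullback q π₀ := ρq ≫ Φ with hΨdef
  set π₀s : PqW ⟶ W := Ψ ≫ fstM with hπ₀sdef
  set π₁s : PqW ⟶ W := ρq ≫ sndN with hπ₁sdef
  set γs : PqW ⟶ PE := Ψ ≫ sndM with hγsdef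
  have hΨfib : M.fib Ψ := M.fib_comp hfρq hΦfib
  have hσΨ : σq ≫ Ψ = cM := by
    rw [hΨdef, ← Category.assoc, hfacq, hcNdef, hΦdef]; simp [pullback.lift_fst, pullback.lift_snd, pullback.lift_fst_assoc, pullback.lift_snd_assoc]
  have hσπ₀s : σq ≫ π₀s = 𝟙 W := by
    rw [hπ₀sdef, ← Category.assoc, hσΨ, hcMfst]
  have hσπ₁s : σq ≫ π₁s = 𝟙 W := by
    rw [hπ₁sdef, ← Category.assoc, hfacq, hcNdef, hsndNdef]; simp [pullback.lift_fst, pullback.lift_snd, pullback.lift_fst_assoc, pullback.lift_snd_assoc]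
  have hσγs : σq ≫ γs = q ≫ σE := by
    rw [hγsdef, ← Category.assoc, hσΨ, hcMsnd]
  have hcMweq : M.weq cM :=
    M.weq_of_comp_right cM fstM hfstMweq (by rw [hcMfst]; exact M.weq_id W)
  have hΨweq : M.weq Ψ := M.weq_of_comp_left σq Ψ hwσq (by rw [hσΨ]; exact hcMweq)
  have hπ₀sweq : M.weq π₀s :=
    M.weq_of_comp_left σq π₀s hwσq (by rw [hσπ₀s]; exact M.weq_id W)
  have hπ₁sweq : M.weq π₁s :=
    M.weq_of_comp_left σq π₁s hwσq (by rw [hσπ₁s]; exact M.weq_id W)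
  have hNcond : Φ ≫ m₁ = sndN ≫ q := by
    rw [hΦdef, hsndNdef]; exact pullback.condition
  have hπ₁sq : π₁s ≫ q = γs ≫ π₁ :=
    calc π₁s ≫ q = ρq ≫ (sndN ≫ q) := by rw [hπ₁sdef, Category.assoc]
      _ = ρq ≫ (Φ ≫ m₁) := by rw [hNcond]
      _ = ((ρq ≫ Φ) ≫ sndM) ≫ π₁ := by
          show ρq ≫ (Φ ≫ sndM ≫ π₁) = _; simp only [Category.assoc]
      _ = γs ≫ π₁ := by rw [hγsdef, hΨdef]
  -- the map `n` classifying the homotopy `q ≫ K`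
  have hn : 𝟙 W ≫ q = (q ≫ K) ≫ π₀ := by
    rw [Category.assoc, hKπ₀]; simp
  set n : W ⟶ pullback q π₀ := pullback.lift (𝟙 W) (q ≫ K) hn with hndef
  have hnfst : n ≫ fstM = 𝟙 W := by rw [hndef, hfstMdef]; simp [pullback.lift_fst, pullback.lift_snd, pullback.lift_fst_assoc, pullback.lift_snd_assoc]
  have hnsnd : n ≫ sndM = q ≫ K := by rw [hndef, hsndMdef]; simp [pullback.lift_fst, pullback.lift_snd, pullback.lift_fst_assoc, pullback.lift_snd_assoc]
  -- Z: the object of lifts of the homotopy `q ≫ K`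
  set θ : pullback n Ψ ⟶ W := pullback.fst n Ψ with hθdef
  set ℓ : pullback n Ψ ⟶ PqW := pullback.snd n Ψ with hℓdef
  obtain ⟨hθfib, hθweq⟩ := M.trivfib_pullback_fst n hΨfib hΨweq
  rw [← hθdef] at hθfib hθweq
  have hcondZ : θ ≫ n = ℓ ≫ Ψ := by rw [hθdef, hℓdef]; exact pullback.condition
  have hℓπ₀ : ℓ ≫ π₀s = θ := by
    rw [hπ₀sdef, ← Category.assoc, ← hcondZ, Category.assoc, hnfst]; simp
  have hℓγ : ℓ ≫ γs = θ ≫ (q ≫ K) := by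
    rw [hγsdef, ← Category.assoc, ← hcondZ, Category.assoc, hnsnd]
  have hℓweq : M.weq ℓ :=
    M.weq_of_comp_right ℓ π₀s hπ₀sweq (by rw [hℓπ₀]; exact hθweq)
  set Λ : pullback n Ψ ⟶ W := ℓ ≫ π₁s with hΛdef
  have hΛweq : M.weq Λ := M.weq_comp ℓ π₁s hℓweq hπ₁sweq
  have hΛq : Λ ≫ q = ((θ ≫ q) ≫ r) ≫ j :=
    calc Λ ≫ q = ℓ ≫ (π₁s ≫ q) := by rw [hΛdef, Category.assoc]
      _ = (ℓ ≫ γs) ≫ π₁ := by rw [hπ₁sq, ← Category.assoc]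
      _ = θ ≫ q ≫ K ≫ π₁ := by rw [hℓγ]; simp only [Category.assoc]
      _ = ((θ ≫ q) ≫ r) ≫ j := by rw [hKπ₁]; simp only [Category.assoc]
  set v : pullback n Ψ ⟶ pullback j q := pullback.lift ((θ ≫ q) ≫ r) Λ hΛq.symm
    with hvdef
  -- the tautological map `ζ` from the pullback into `Z`
  set u : pullback j q ⟶ W := pullback.snd j q with hudef
  set fstP : pullback j q ⟶ A := pullback.fst j q with hfstPdef
  have hcondP : fstP ≫ j = u ≫ q := by rw [hudef, hfstPdef]; exact pullback.condition
  have hζw : u ≫ n = (u ≫ σq) ≫ Ψ := by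
    apply pullback.hom_ext
    · rw [← hfstMdef]
      have e1 : (u ≫ n) ≫ fstM = u := by
        rw [Category.assoc, hnfst, Category.comp_id]
      have e2 : ((u ≫ σq) ≫ Ψ) ≫ fstM = u := by
        rw [Category.assoc, ← hπ₀sdef, Category.assoc, hσπ₀s, Category.comp_id]
      rw [e1, e2]
    · rw [← hsndMdef]
      have e1 : (u ≫ n) ≫ sndM = u ≫ q ≫ K := by
        rw [Category.assoc, hnsnd]
      have e2 : ((u ≫ σq) ≫ Ψ) ≫ sndM = u ≫ q ≫ σE := by
        rw [Category.assoc, ← hγsdef, Category.assoc, hσγs]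
      rw [e1, e2, ← Category.assoc, ← hcondP, Category.assoc, hK1,
        ← Category.assoc, hcondP, Category.assoc]
  set ζ : pullback j q ⟶ pullback n Ψ := pullback.lift u (u ≫ σq) hζw with hζdef
  have hζθ : ζ ≫ θ = u := by rw [hζdef, hθdef]; simp [pullback.lift_fst, pullback.lift_snd, pullback.lift_fst_assoc, pullback.lift_snd_assoc]
  have hζℓ : ζ ≫ ℓ = u ≫ σq := by rw [hζdef, hℓdef]; simp [pullback.lift_fst, pullback.lift_snd, pullback.lift_fst_assoc, pullback.lift_snd_assoc]
  have hζΛ : ζ ≫ Λ = u := by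
    rw [hΛdef, ← Category.assoc, hζℓ, Category.assoc, hσπ₁s]; simp
  have hvu : v ≫ u = Λ := by rw [hvdef, hudef]; simp [pullback.lift_fst, pullback.lift_snd, pullback.lift_fst_assoc, pullback.lift_snd_assoc]
  have hvfst : v ≫ fstP = (θ ≫ q) ≫ r := by rw [hvdef, hfstPdef]; simp [pullback.lift_fst, pullback.lift_snd, pullback.lift_fst_assoc, pullback.lift_snd_assoc]
  have hζv : ζ ≫ v = 𝟙 (pullback j q) := by
    apply pullback.hom_ext
    · rw [← hfstPdef, Category.id_comp, Category.assoc, hvfst,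
        ← Category.assoc, ← Category.assoc, hζθ, ← hcondP, Category.assoc, hr,
        Category.comp_id]
    · rw [← hudef, Category.id_comp, Category.assoc, hvu, hζΛ]
  exact M.weq_retract u Λ
    ⟨ζ, v, 𝟙 W, 𝟙 W, hζv, by simp, by rw [hζΛ]; simp, by rw [hvu]; simp⟩ hΛweq

end Aux

/-- Every weak equivalence between fibrant objects is a universal weak
equivalence: its base change along any fibration is again a weak
equivalence. -/
theorem weq_between_fibrant_is_universal_weq
    {C : Type u} [Category.{v} C] [HasFiniteLimits C] [HasFiniteColimits C]
    (M : ModelStructure C) {A B X : C} (f : A ⟶ B) (p : X ⟶ B)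
    (hf : M.weq f)
    (hA : M.fib (terminal.from A)) (hB : M.fib (terminal.from B))
    (hp : M.fib p) :
    M.weq (pullback.snd f p) := by
  obtain ⟨E, j, p₂, hcj, hwj, hfp₂, hfac⟩ := M.factor_triv_cof_fib f
  subst hfac
  have hwp₂ : M.weq p₂ := M.weq_of_comp_left j p₂ hwj hf
  have hE : M.fib (terminal.from E) := by
    rw [← terminal.comp_from p₂]; exact M.fib_comp hfp₂ hB
  have hqW : M.fib (pullback.fst p₂ p) := M.fib_pullback_fst p₂ hp
  have hsndW := M.trivfib_pullback_snd p hfp₂ hwp₂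
  have hu : M.weq (pullback.snd j (pullback.fst p₂ p)) :=
    M.weq_pullback_snd_of_triv_cof j (pullback.fst p₂ p) hcj hwj hqW hA hE
  have key : (pullbackRightPullbackFstIso p₂ p j).hom ≫ pullback.snd (j ≫ p₂) p =
      pullback.snd j (pullback.fst p₂ p) ≫ pullback.snd p₂ p :=
    pullbackRightPullbackFstIso_hom_snd p₂ p j
  have heq : pullback.snd (j ≫ p₂) p =
      (pullbackRightPullbackFstIso p₂ p j).inv ≫
        (pullback.snd j (pullback.fst p₂ p) ≫ pullback.snd p₂ p) := by
    rw [← key, Iso.inv_hom_id_assoc]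
  rw [heq]
  have hinv : M.weq (pullbackRightPullbackFstIso p₂ p j).inv :=
    M.weq_iso_hom (pullbackRightPullbackFstIso p₂ p j).symm
  exact M.weq_comp _ _ hinv (M.weq_comp _ _ hu hsndW.2)
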